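/- arXiv:1211.0431 — 2 statements merged into one kernel-verified Lean document; each statement's English description precedes it below -/
import Mathlib

section
/- Let (a_k)_{k≥0} be a sequence of real numbers with a_0 = 1, a_k = 0 for all odd k, and a_{2m} = (2m-1)!! · a_2^m for all m ≥ 1 (the moments of a centered Gaussian-like functional). Fix real numbers C_2, C_4, ..., C_{2n} and set b_{2m} := a_{2m} + Σ_{k=0}^{2m-2} C(2m,k) · C_{2m-k} · a_k for m = 1,...,n, where C_j = 0 for odd j. Then b_{2m} = (2m-1)!! · b_2^m for all m = 1,...,n and all such sequences (a_k) if and only if C_{2m} = (2m-1)!! · C_2^m for all m = 1,...,n. -/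
open Finset Nat

lemma dfac_mul (k : ℕ) : (2*k-1)‼ * (2^k * k !) = (2*k)! := by
  cases k with
  | zero => simp
  | succ k =>
    have h1 : 2*(k+1) = (2*(k+1)-1) + 1 := by omega
    have h2 : 2*(k+1)-1+1 = 2*(k+1) := by omega
    have h3 : (2*(k+1))! = (2*(k+1))‼ * (2*(k+1)-1)‼ := by
      conv_lhs => rw [h1]
      rw [Nat.factorial_eq_mul_doubleFactorial, h2]
    rw [h3, Nat.doubleFactorial_two_mul]
    ring

lemma nat_key (m j : ℕ) (h : j ≤ m) :
    Nat.choose (2*m) (2*j) * ((2*j-1)‼ * (2*(m-j)-1)‼) = (2*m-1)‼ * Nat.choose m j := by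
  apply Nat.eq_of_mul_eq_mul_right
    (show 0 < (2^j * j !) * (2^(m-j) * (m-j)!) by positivity)
  have h1 := dfac_mul j
  have h2 := dfac_mul (m - j)
  have h3 := dfac_mul m
  have h4 : Nat.choose (2*m) (2*j) * (2*j)! * (2*m - 2*j)! = (2*m)! :=
    Nat.choose_mul_factorial_mul_factorial (by omega)
  have h5 : Nat.choose m j * j ! * (m-j)! = m ! :=
    Nat.choose_mul_factorial_mul_factorial h
  have h6 : 2*(m-j) = 2*m - 2*j := by omega
  have hpow : (2:ℕ)^j * 2^(m-j) = 2^m := by rw [← pow_add]; congr 1; omega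
  calc Nat.choose (2*m) (2*j) * ((2*j-1)‼ * (2*(m-j)-1)‼) * ((2^j * j !) * (2^(m-j) * (m-j)!))
      = Nat.choose (2*m) (2*j) * ((2*j-1)‼ * (2^j * j !)) * ((2*(m-j)-1)‼ * (2^(m-j) * (m-j)!)) := by ring
    _ = Nat.choose (2*m) (2*j) * (2*j)! * (2*m-2*j)! := by rw [h1, h2, h6]
    _ = (2*m)! := h4
    _ = (2*m-1)‼ * (2^m * m !) := h3.symm
    _ = (2*m-1)‼ * Nat.choose m j * ((2^j * j !) * (2^(m-j) * (m-j)!)) := by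
        rw [← h5, ← hpow]; ring

lemma sum_range_two_mul {M : Type*} [AddCommMonoid M] (f : ℕ → M) :
    ∀ N : ℕ, ∑ k ∈ range (2*N), f k = ∑ j ∈ range N, (f (2*j) + f (2*j+1))
  | 0 => by simp
  | N+1 => by
    have : 2*(N+1) = 2*N + 1 + 1 := by ring
    rw [this, Finset.sum_range_succ, Finset.sum_range_succ, sum_range_two_mul f N,
      Finset.sum_range_succ, add_assoc]

theorem wick_renormalization_iff (n : ℕ) (hn : 1 ≤ n)
    (C : ℕ → ℝ) (hCodd : ∀ j, Odd j → C j = 0) :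
    (∀ a : ℕ → ℝ, a 0 = 1 → (∀ k, Odd k → a k = 0) →
        (∀ m, 1 ≤ m → a (2 * m) = (Nat.doubleFactorial (2 * m - 1) : ℝ) * (a 2) ^ m) →
        ∀ m, 1 ≤ m → m ≤ n →
          (a (2 * m) + ∑ k ∈ range (2 * m - 1),
              (Nat.choose (2 * m) k : ℝ) * C (2 * m - k) * a k) =
            (Nat.doubleFactorial (2 * m - 1) : ℝ) *
              (a 2 + ∑ k ∈ range 1, (Nat.choose 2 k : ℝ) * C (2 - k) * a k) ^ m)
    ↔ (∀ m, 1 ≤ m → m ≤ n → C (2 * m) = (Nat.doubleFactorial (2 * m - 1) : ℝ) * (C 2) ^ m) := by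
  constructor
  · intro h m hm hmn
    set a : ℕ → ℝ := fun k => if k = 0 then 1 else 0 with ha
    have ha0 : a 0 = 1 := by simp [ha]
    have haodd : ∀ k, Odd k → a k = 0 := by
      intro k hk
      have : k ≠ 0 := by rintro rfl; exact (Nat.not_odd_iff_even.mpr Even.zero) hk
      simp [ha, this]
    have hamom : ∀ m, 1 ≤ m → a (2 * m) = (Nat.doubleFactorial (2 * m - 1) : ℝ) * (a 2) ^ m := by
      intro m hm
      have h1 : a (2*m) = 0 := by simp [ha]; omega
      have h2 : a 2 = 0 := by simp [ha]
      rw [h1, h2, zero_pow (by omega), mul_zero]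
    have key := h a ha0 haodd hamom m hm hmn
    have hL : ∑ k ∈ range (2 * m - 1), (Nat.choose (2 * m) k : ℝ) * C (2 * m - k) * a k
        = C (2 * m) := by
      rw [Finset.sum_eq_single_of_mem 0 (Finset.mem_range.mpr (by omega))]
      · simp [ha]
      · intro k _ hk; simp [ha, hk]
    have hR : ∑ k ∈ range 1, (Nat.choose 2 k : ℝ) * C (2 - k) * a k = C 2 := by
      rw [Finset.sum_range_one]; simp [ha]
    rw [hL, hR] at key
    have h1 : a (2*m) = 0 := by simp [ha]; omega
    have h2 : a 2 = 0 := by simp [ha]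
    rw [h1, h2, zero_add, zero_add] at key
    exact key
  · intro hC a ha0 haodd hamom m hm hmn
    have hR : ∑ k ∈ range 1, (Nat.choose 2 k : ℝ) * C (2 - k) * a k = C 2 := by
      rw [Finset.sum_range_one]; simp [ha0]
    rw [hR]
    -- reduce LHS sum to even indices
    set f : ℕ → ℝ := fun k => (Nat.choose (2*m) k : ℝ) * C (2*m - k) * a k with hf
    have hstep : ∑ k ∈ range (2 * m - 1), f k = ∑ j ∈ range m, f (2*j) := by
      have hlast : f (2*m - 1) = 0 := by
        have : Odd (2*m - 1) := by refine ⟨m - 1, by omega⟩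
        simp [hf, haodd _ this]
      have h2m : 2*m = (2*m - 1) + 1 := by omega
      have : ∑ k ∈ range (2*m), f k = ∑ k ∈ range (2 * m - 1), f k := by
        rw [h2m, Finset.sum_range_succ, ← h2m, hlast, add_zero]
      rw [← this, sum_range_two_mul f m]
      apply Finset.sum_congr rfl
      intro j _
      have hz : a (2*j+1) = 0 := haodd _ ⟨j, by omega⟩
      have : f (2*j + 1) = 0 := by simp [hf, hz]
      rw [this, add_zero]
    rw [hstep]
    -- now express everything
    have hterm : ∀ j ∈ range m, f (2*j) =
        ((2*m-1)‼ : ℝ) * (Nat.choose m j : ℝ) * (a 2)^j * (C 2)^(m-j) := by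
      intro j hj
      have hjm : j < m := Finset.mem_range.mp hj
      have haj : a (2*j) = ((2*j-1)‼ : ℝ) * (a 2)^j := by
        rcases Nat.eq_zero_or_pos j with rfl | hj0
        · simp [ha0]
        · exact hamom j hj0
      have hCj : C (2*m - 2*j) = ((2*(m-j)-1)‼ : ℝ) * (C 2)^(m-j) := by
        have h1 : 2*m - 2*j = 2*(m-j) := by omega
        rw [h1]
        exact hC (m-j) (by omega) (by omega)
      have hkey := nat_key m j hjm.le
      have hkeyR : (Nat.choose (2*m) (2*j) : ℝ) * (((2*j-1)‼ : ℕ) : ℝ) * (((2*(m-j)-1)‼ : ℕ) : ℝ)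
          = (((2*m-1)‼ : ℕ) : ℝ) * (Nat.choose m j : ℝ) := by
        rw [← Nat.cast_mul, ← Nat.cast_mul, ← mul_assoc] at *
        exact_mod_cast congrArg (Nat.cast : ℕ → ℝ) hkey
      simp only [hf]
      rw [haj, hCj]
      calc (Nat.choose (2*m) (2*j) : ℝ) * (((2*(m-j)-1)‼ : ℕ) * (C 2)^(m-j)) * (((2*j-1)‼:ℕ) * (a 2)^j)
          = ((Nat.choose (2*m) (2*j) : ℝ) * ((2*j-1)‼:ℕ) * ((2*(m-j)-1)‼:ℕ)) * (a 2)^j * (C 2)^(m-j) := by ring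
        _ = (((2*m-1)‼:ℕ) : ℝ) * (Nat.choose m j : ℝ) * (a 2)^j * (C 2)^(m-j) := by rw [hkeyR]
    rw [Finset.sum_congr rfl hterm]
    have ham : a (2*m) = ((2*m-1)‼ : ℝ) * (a 2)^m := hamom m hm
    rw [ham, add_pow]
    rw [Finset.mul_sum, Finset.sum_range_succ]
    have hlastR : ((2*m-1)‼:ℝ) * ((a 2)^m * (C 2)^(m-m) * (Nat.choose m m : ℝ)) = ((2*m-1)‼:ℝ) * (a 2)^m := by
      simp
    rw [hlastR]
    rw [add_comm (((2*m-1)‼:ℝ) * (a 2)^m)]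
    congr 1
    apply Finset.sum_congr rfl
    intro j _
    ring
end

section
/- ('if' direction) Suppose C_{2m} = (2m-1)!! · C_2^m for m = 1,...,n, and let a_{2m} = (2m-1)!! · a_2^m with a_k = 0 for odd k, a_0 = 1. Define b_{2m} = Σ_{k=0}^{2m} C(2m,k) · C_{2m-k} · a_k with C_0 = 1 and C_j = 0 for odd j and for j < 0 interpreted as absent. Then b_{2m} = (2m-1)!! · (a_2 + C_2)^m = (2m-1)!! · b_2^m for all m = 1,...,n. -/
open Finset

lemma df_mul_aux (k : ℕ) :
    Nat.doubleFactorial (2 * k - 1) * (2 ^ k * Nat.factorial k) = Nat.factorial (2 * k) := by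
  cases k with
  | zero => rfl
  | succ k =>
    have h1 : 2 * (k + 1) - 1 = 2 * k + 1 := by omega
    have h2 : 2 * (k + 1) = (2 * k + 1) + 1 := by omega
    have hd := Nat.doubleFactorial_two_mul (k + 1)
    rw [h2] at hd
    rw [h1, h2, ← hd, Nat.factorial_eq_mul_doubleFactorial]
    ring

lemma key_identity (m j : ℕ) (hj : j ≤ m) :
    Nat.choose (2 * m) (2 * j) * Nat.doubleFactorial (2 * j - 1) *
      Nat.doubleFactorial (2 * (m - j) - 1)
      = Nat.doubleFactorial (2 * m - 1) * Nat.choose m j := by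
  have h1 := df_mul_aux j
  have h2 := df_mul_aux (m - j)
  have h3 := df_mul_aux m
  have hc : Nat.choose (2 * m) (2 * j) * Nat.factorial (2 * j) * Nat.factorial (2 * (m - j))
      = Nat.factorial (2 * m) := by
    have e : 2 * (m - j) = 2 * m - 2 * j := by omega
    rw [e]
    exact Nat.choose_mul_factorial_mul_factorial (by omega)
  have hc2 : Nat.choose m j * Nat.factorial j * Nat.factorial (m - j) = Nat.factorial m :=
    Nat.choose_mul_factorial_mul_factorial hj
  have hpos : 0 < 2 ^ j * Nat.factorial j * (2 ^ (m - j) * Nat.factorial (m - j)) := by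
    positivity
  apply Nat.eq_of_mul_eq_mul_right hpos
  have e1 : Nat.choose (2 * m) (2 * j) * Nat.doubleFactorial (2 * j - 1) *
      Nat.doubleFactorial (2 * (m - j) - 1) *
      (2 ^ j * Nat.factorial j * (2 ^ (m - j) * Nat.factorial (m - j)))
      = Nat.choose (2 * m) (2 * j) * Nat.factorial (2 * j) * Nat.factorial (2 * (m - j)) := by
    rw [← h1, ← h2]; ring
  have hjm : j + (m - j) = m := by omega
  have e2 : Nat.doubleFactorial (2 * m - 1) * Nat.choose m j *
      (2 ^ j * Nat.factorial j * (2 ^ (m - j) * Nat.factorial (m - j)))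
      = Nat.factorial (2 * m) := by
    calc Nat.doubleFactorial (2 * m - 1) * Nat.choose m j *
        (2 ^ j * Nat.factorial j * (2 ^ (m - j) * Nat.factorial (m - j)))
        = Nat.doubleFactorial (2 * m - 1) *
          (2 ^ (j + (m - j)) * (Nat.choose m j * Nat.factorial j * Nat.factorial (m - j))) := by
          rw [pow_add]; ring
      _ = Nat.factorial (2 * m) := by rw [hjm, hc2, h3]
  rw [e1, hc, e2]

lemma sum_even_terms (f : ℕ → ℝ) (hodd : ∀ k, Odd k → f k = 0) (M : ℕ) :
    ∑ k ∈ range (2 * M + 1), f k = ∑ j ∈ range (M + 1), f (2 * j) := by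
  induction M with
  | zero => simp
  | succ M ih =>
    have h : 2 * (M + 1) + 1 = (2 * M + 1) + 1 + 1 := by omega
    rw [h, sum_range_succ, sum_range_succ, ih, hodd (2 * M + 1) (Nat.odd_iff.mpr (by omega))]
    have hr : ∑ j ∈ range (M + 1 + 1), f (2 * j)
        = (∑ j ∈ range (M + 1), f (2 * j)) + f (2 * (M + 1)) := sum_range_succ _ _
    rw [hr, show 2 * (M + 1) = 2 * M + 1 + 1 from by omega]
    ring

theorem wick_renormalization_if_direction (n : ℕ)
    (C a : ℕ → ℝ)
    (hC0 : C 0 = 1) (hCodd : ∀ j, Odd j → C j = 0)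
    (hC : ∀ m, 1 ≤ m → m ≤ n → C (2 * m) = (Nat.doubleFactorial (2 * m - 1) : ℝ) * (C 2) ^ m)
    (ha0 : a 0 = 1) (haodd : ∀ k, Odd k → a k = 0)
    (ha : ∀ m, 1 ≤ m → a (2 * m) = (Nat.doubleFactorial (2 * m - 1) : ℝ) * (a 2) ^ m) :
    ∀ m, 1 ≤ m → m ≤ n →
      (∑ k ∈ range (2 * m + 1), (Nat.choose (2 * m) k : ℝ) * C (2 * m - k) * a k) =
        (Nat.doubleFactorial (2 * m - 1) : ℝ) * (a 2 + C 2) ^ m := by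
  intro m h1 h2
  have hodd : ∀ k, Odd k → (Nat.choose (2 * m) k : ℝ) * C (2 * m - k) * a k = 0 := by
    intro k hk
    rw [haodd k hk, mul_zero]
  rw [sum_even_terms _ hodd m]
  have hcongr : ∀ j ∈ range (m + 1),
      (Nat.choose (2 * m) (2 * j) : ℝ) * C (2 * m - 2 * j) * a (2 * j)
        = (Nat.doubleFactorial (2 * m - 1) : ℝ) *
          ((a 2) ^ j * (C 2) ^ (m - j) * (Nat.choose m j : ℝ)) := by
    intro j hj
    have hjm : j ≤ m := by
      have := mem_range.mp hj; omega
    have hCj : C (2 * m - 2 * j)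
        = (Nat.doubleFactorial (2 * (m - j) - 1) : ℝ) * (C 2) ^ (m - j) := by
      rcases eq_or_lt_of_le hjm with he | hl
      · subst he
        simp [hC0, Nat.doubleFactorial]
      · rw [show 2 * m - 2 * j = 2 * (m - j) from by omega]
        exact hC (m - j) (by omega) (by omega)
    have haj : a (2 * j) = (Nat.doubleFactorial (2 * j - 1) : ℝ) * (a 2) ^ j := by
      rcases Nat.eq_zero_or_pos j with he | hl
      · subst he
        simp [ha0, Nat.doubleFactorial]
      · exact ha j hl
    rw [hCj, haj]
    have hk := key_identity m j hjm
    have hkR : (Nat.choose (2 * m) (2 * j) : ℝ) * (Nat.doubleFactorial (2 * j - 1) : ℝ) *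
        (Nat.doubleFactorial (2 * (m - j) - 1) : ℝ)
        = (Nat.doubleFactorial (2 * m - 1) : ℝ) * (Nat.choose m j : ℝ) := by
      exact_mod_cast congrArg (fun x : ℕ => (x : ℝ)) hk
    calc (Nat.choose (2 * m) (2 * j) : ℝ) *
        ((Nat.doubleFactorial (2 * (m - j) - 1) : ℝ) * (C 2) ^ (m - j)) *
        ((Nat.doubleFactorial (2 * j - 1) : ℝ) * (a 2) ^ j)
        = ((Nat.choose (2 * m) (2 * j) : ℝ) * (Nat.doubleFactorial (2 * j - 1) : ℝ) *
          (Nat.doubleFactorial (2 * (m - j) - 1) : ℝ)) * ((a 2) ^ j * (C 2) ^ (m - j)) := by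
          ring
      _ = _ := by rw [hkR]; ring
  rw [Finset.sum_congr rfl hcongr, ← Finset.mul_sum, ← add_pow]
end
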